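/- The number of connected induced subgraphs of size n containing a fixed vertex v in a graph of maximum degree Δ is at most (e·Δ)^{n-1}. -/

import Mathlib

open Finset

-- (1+1/n)^n ≤ e
lemma aux_one_add_pow (n : ℕ) (hn : 1 ≤ n) : (1 + 1/(n:ℝ))^n ≤ Real.exp 1 := by
  have hn0 : (0:ℝ) < n := by exact_mod_cast hn
  have h1 : (1 + 1/(n:ℝ)) ≤ Real.exp (1/n) := by
    have := Real.add_one_le_exp (1/(n:ℝ))
    linarith
  calc (1 + 1/(n:ℝ))^n ≤ (Real.exp (1/n))^n := by
        apply pow_le_pow_left₀ (by positivity) h1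
    _ = Real.exp 1 := by
        rw [← Real.exp_nat_mul]
        congr 1
        field_simp

-- n^(n-1) ≤ e^(n-1) * (n-1)!
lemma aux_pow_le_exp_factorial : ∀ n : ℕ, 1 ≤ n →
    ((n:ℝ))^(n-1) ≤ (Real.exp 1)^(n-1) * (n-1).factorial := by
  intro n
  induction n with
  | zero => intro h; omega
  | succ m ih =>
    intro _
    rcases Nat.eq_zero_or_pos m with hm | hm
    · subst hm; simp
    · have ihm := ih hm
      have hm0 : (0:ℝ) < m := by exact_mod_cast hm
      have key : ((m+1:ℕ):ℝ)^m ≤ Real.exp 1 * m * ((m:ℝ))^(m-1) := by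
        have h1 : ((m+1:ℕ):ℝ) = (1 + 1/(m:ℝ)) * m := by
          push_cast; field_simp
        rw [h1, mul_pow]
        have h2 : ((m:ℝ))^m = m * ((m:ℝ))^(m-1) := by
          rw [← pow_succ']
          congr 1
          omega
        rw [h2]
        have := aux_one_add_pow m hm
        have hp : (0:ℝ) ≤ m * ((m:ℝ))^(m-1) := by positivity
        calc (1 + 1/(m:ℝ))^m * (m * ((m:ℝ))^(m-1)) ≤ Real.exp 1 * (m * ((m:ℝ))^(m-1)) := by
              apply mul_le_mul_of_nonneg_right this hp
          _ = Real.exp 1 * m * ((m:ℝ))^(m-1) := by ring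
      have hfac : (m.factorial : ℝ) = m * ((m-1).factorial : ℝ) := by
        exact_mod_cast (congrArg (Nat.cast : ℕ → ℝ) (Nat.mul_factorial_pred hm.ne')).symm
      have hexp : (Real.exp 1)^m = Real.exp 1 * (Real.exp 1)^(m-1) := by
        have h : m = (m-1)+1 := by omega
        rw [h, pow_succ]
        have h2 : (m-1)+1-1 = m-1 := by omega
        rw [h2]
        ring
      simp only [Nat.add_sub_cancel]
      calc ((m+1:ℕ):ℝ)^m ≤ Real.exp 1 * m * ((m:ℝ))^(m-1) := key
        _ ≤ Real.exp 1 * m * ((Real.exp 1)^(m-1) * (m-1).factorial) := by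
            apply mul_le_mul_of_nonneg_left ihm
            positivity
        _ = (Real.exp 1 * (Real.exp 1)^(m-1)) * (m * (m-1).factorial) := by ring
        _ = (Real.exp 1)^m * (m.factorial : ℝ) := by rw [hexp, hfac]; try ring

-- choose bound
lemma aux_choose_le (n Δ : ℕ) (hn : 1 ≤ n) :
    (((n*Δ).choose (n-1) : ℕ) : ℝ) ≤ (Real.exp 1 * Δ)^(n-1) := by
  have h1 : ((n*Δ).choose (n-1)) * (n-1).factorial ≤ (n*Δ)^(n-1) := by
    calc ((n*Δ).choose (n-1)) * (n-1).factorial = (n*Δ).descFactorial (n-1) := by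
          rw [Nat.descFactorial_eq_factorial_mul_choose]
          ring
      _ ≤ (n*Δ)^(n-1) := Nat.descFactorial_le_pow _ _
  have h1' : (((n*Δ).choose (n-1) : ℕ) : ℝ) * ((n-1).factorial : ℝ) ≤ ((n:ℝ)*Δ)^(n-1) := by
    exact_mod_cast h1
  have hf : (0:ℝ) < ((n-1).factorial : ℝ) := by exact_mod_cast Nat.factorial_pos _
  have h2 : ((n:ℝ)*Δ)^(n-1) = (n:ℝ)^(n-1) * (Δ:ℝ)^(n-1) := by rw [mul_pow]
  have h3 := aux_pow_le_exp_factorial n hn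
  have hΔ0 : (0:ℝ) ≤ (Δ:ℝ)^(n-1) := by positivity
  calc (((n*Δ).choose (n-1) : ℕ) : ℝ) = (((n*Δ).choose (n-1) : ℕ) : ℝ) * ((n-1).factorial : ℝ) / ((n-1).factorial : ℝ) := by
        field_simp
    _ ≤ ((n:ℝ)*Δ)^(n-1) / ((n-1).factorial : ℝ) := by
        gcongr
    _ = (n:ℝ)^(n-1) / ((n-1).factorial : ℝ) * (Δ:ℝ)^(n-1) := by rw [h2]; ring
    _ ≤ (Real.exp 1)^(n-1) * (Δ:ℝ)^(n-1) := by
        apply mul_le_mul_of_nonneg_right _ hΔ0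
        rw [div_le_iff₀ hf]
        exact h3
    _ = (Real.exp 1 * Δ)^(n-1) := by rw [mul_pow]



set_option linter.unusedSectionVars false

section Enc
variable {V : Type*} [Fintype V] [DecidableEq V] [LinearOrder V]
variable (G : SimpleGraph V) [DecidableRel G.Adj]

/-- Greedy construction of a connected enumeration of `γ` starting from `v`. -/
def bl (γ : Finset V) (v : V) : ℕ → List V
  | 0 => [v]
  | k+1 =>
    let l := bl γ v k
    if h : (γ.filter (fun w => w ∉ l ∧ ∃ u ∈ l, G.Adj u w)).Nonempty
    then l ++ [(γ.filter (fun w => w ∉ l ∧ ∃ u ∈ l, G.Adj u w)).min' h]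
    else l

def nextS (γ : Finset V) (v : V) (k : ℕ) : Finset V :=
  γ.filter (fun w => w ∉ bl G γ v k ∧ ∃ u ∈ bl G γ v k, G.Adj u w)

lemma bl_succ (γ : Finset V) (v : V) (k : ℕ) :
    bl G γ v (k+1) = if h : (nextS G γ v k).Nonempty
      then bl G γ v k ++ [(nextS G γ v k).min' h] else bl G γ v k := rfl

lemma bl_prefix (γ : Finset V) (v : V) {k m : ℕ} (h : k ≤ m) :
    bl G γ v k <+: bl G γ v m := by
  induction m with
  | zero => simp_all
  | succ m ih =>
    rcases Nat.lt_or_ge k (m+1) with h' | h'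
    · have := ih (by omega)
      refine this.trans ?_
      rw [bl_succ]
      split
      · exact ⟨_, rfl⟩
      · exact List.prefix_refl _
    · have : k = m+1 := by omega
      subst this; exact List.prefix_refl _

lemma mem_bl_self (γ : Finset V) (v : V) (k : ℕ) : v ∈ bl G γ v k := by
  have h := bl_prefix G γ v (Nat.zero_le k)
  exact h.subset (by simp [bl])

set_option linter.unusedSectionVars false

lemma walk_boundary (γ : Finset V) (S : Finset V) :
    ∀ {a b : (γ : Set V)} (_ : (G.induce (γ : Set V)).Walk a b),
      (a : V) ∈ S → (b : V) ∉ S → ∃ w ∈ γ, w ∉ S ∧ ∃ u ∈ S, G.Adj u w := by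
  intro a b p
  induction p with
  | nil => intro h1 h2; exact absurd h1 h2
  | @cons a c b hadj p ih =>
    intro ha hb
    by_cases hc : (c : V) ∈ S
    · exact ih hc hb
    · exact ⟨c, c.2, hc, a, ha, hadj⟩

/-- boundary crossing lemma -/
lemma exists_boundary (γ : Finset V) (hconn : (G.induce (γ : Set V)).Connected)
    (S : Finset V) (hS : S ⊆ γ) (v : V) (hv : v ∈ S)
    (hne : ∃ x ∈ γ, x ∉ S) : ∃ w ∈ γ, w ∉ S ∧ ∃ u ∈ S, G.Adj u w := by
  obtain ⟨x, hxγ, hxS⟩ := hne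
  obtain ⟨p⟩ := hconn.preconnected ⟨v, hS hv⟩ ⟨x, hxγ⟩
  exact walk_boundary G γ S p hv hxS

lemma bl_invariant (γ : Finset V) (v : V) (hv : v ∈ γ)
    (hconn : (G.induce (γ : Set V)).Connected) :
    ∀ k, k < γ.card →
      (bl G γ v k).length = k+1 ∧ (bl G γ v k).Nodup ∧ ∀ w ∈ bl G γ v k, w ∈ γ := by
  intro k
  induction k with
  | zero => intro _; refine ⟨rfl, by simp [bl], ?_⟩; intro w hw; simp [bl] at hw; subst hw; exact hv
  | succ k ih =>
    intro hk
    obtain ⟨hlen, hnd, hmem⟩ := ih (by omega)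
    have hSne : (nextS G γ v k).Nonempty := by
      have hsub : (bl G γ v k).toFinset ⊆ γ := by
        intro w hw; exact hmem w (List.mem_toFinset.1 hw)
      have hcard : (bl G γ v k).toFinset.card = k+1 := by
        rw [List.toFinset_card_of_nodup hnd, hlen]
      have hex : ∃ x ∈ γ, x ∉ (bl G γ v k).toFinset := by
        by_contra h
        push_neg at h
        have : γ ⊆ (bl G γ v k).toFinset := h
        have := Finset.card_le_card this
        omega
      obtain ⟨w, hwγ, hwS, u, hu, hadj⟩ :=
        exists_boundary G γ hconn _ hsub v (List.mem_toFinset.2 (mem_bl_self G γ v k)) hex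
      exact ⟨w, by
        simp only [nextS, Finset.mem_filter]
        exact ⟨hwγ, by simpa using hwS, u, List.mem_toFinset.1 hu, hadj⟩⟩
    have hm := Finset.min'_mem _ hSne
    simp only [nextS, Finset.mem_filter] at hm
    rw [bl_succ, dif_pos hSne]
    refine ⟨by simp [hlen], ?_, ?_⟩
    · simp only [List.nodup_append, List.nodup_cons, List.nodup_nil]
      exact ⟨hnd, by simp, by simp only [List.mem_singleton]; rintro a ha _ rfl rfl; exact hm.2.1 ha⟩
    · intro w hw
      rcases List.mem_append.1 hw with h | h
      · exact hmem w h
      · simp at h; subst h; exact hm.1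

variable (γ : Finset V) (v : V)

/-- the canonical enumeration of γ -/
def aSeq (i : ℕ) : V := (bl G γ v (γ.card - 1)).getD i v

lemma getD_of_prefix {l l' : List V} (h : l <+: l') {i : ℕ} (hi : i < l.length) :
    l'.getD i v = l.getD i v := by
  obtain ⟨t, rfl⟩ := h
  rw [List.getD_append _ _ _ _ hi]

/-- parent of index j -/
def par (j : ℕ) : ℕ :=
  if h : ((Finset.range j).filter (fun i => G.Adj (aSeq G γ v i) (aSeq G γ v j))).Nonempty
  then ((Finset.range j).filter (fun i => G.Adj (aSeq G γ v i) (aSeq G γ v j))).min' h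
  else 0

/-- index of neighbor w among neighbors of u -/
def idxN (u w : V) : ℕ := ((G.neighborFinset u).filter (fun x => x < w)).card

/-- the code of γ -/
def code : Finset (ℕ × ℕ) :=
  (Finset.Icc 1 (γ.card - 1)).image
    (fun j => (par G γ v j, idxN G (aSeq G γ v (par G γ v j)) (aSeq G γ v j)))

lemma idxN_lt {Δ : ℕ} (hΔ : ∀ u, G.degree u ≤ Δ) {u w : V} (h : G.Adj u w) :
    idxN G u w < Δ := by
  have h1 : ((G.neighborFinset u).filter (fun x => x < w)).card < G.degree u := by
    apply Finset.card_lt_card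
    rw [Finset.ssubset_iff_of_subset (Finset.filter_subset _ _)]
    exact ⟨w, by simp [h], by simp⟩
  exact lt_of_lt_of_le h1 (hΔ u)

lemma idxN_strictMono {u w w' : V} (h : G.Adj u w) (h' : G.Adj u w') (hlt : w < w') :
    idxN G u w < idxN G u w' := by
  apply Finset.card_lt_card
  rw [Finset.ssubset_iff_of_subset]
  · exact ⟨w, by simp [h, hlt], by simp⟩
  · intro x hx
    simp only [Finset.mem_filter] at hx ⊢
    exact ⟨hx.1, hx.2.trans hlt⟩

lemma idxN_inj {u w w' : V} (h : G.Adj u w) (h' : G.Adj u w')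
    (he : idxN G u w = idxN G u w') : w = w' := by
  rcases lt_trichotomy w w' with hlt | heq | hlt
  · exact absurd he (Nat.ne_of_lt (idxN_strictMono G h h' hlt))
  · exact heq
  · exact absurd he.symm (Nat.ne_of_lt (idxN_strictMono G h' h hlt))

variable (hv : v ∈ γ) (hconn : (G.induce (γ : Set V)).Connected)
include hv hconn

lemma aSeq_eq_getD {k i : ℕ} (hk : k < γ.card) (hi : i ≤ k) :
    aSeq G γ v i = (bl G γ v k).getD i v := by
  have h1 := bl_prefix G γ v (show k ≤ γ.card - 1 by omega)
  have h2 := (bl_invariant G γ v hv hconn k hk).1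
  unfold aSeq
  exact getD_of_prefix v h1 (by omega)

lemma aSeq_zero : aSeq G γ v 0 = v := by
  have h0 : 0 < γ.card := Finset.card_pos.2 ⟨v, hv⟩
  rw [aSeq_eq_getD G γ v hv hconn h0 le_rfl]
  simp [bl]

lemma mem_bl_iff {k : ℕ} (hk : k < γ.card) (w : V) :
    w ∈ bl G γ v k ↔ ∃ i ≤ k, aSeq G γ v i = w := by
  obtain ⟨hlen, hnd, hmem⟩ := bl_invariant G γ v hv hconn k hk
  constructor
  · intro hw
    obtain ⟨i, hi, hgi⟩ := List.mem_iff_getElem.1 hw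
    refine ⟨i, by omega, ?_⟩
    rw [aSeq_eq_getD G γ v hv hconn hk (by omega), List.getD_eq_getElem _ _ (by omega)]
    exact hgi
  · rintro ⟨i, hi, rfl⟩
    rw [aSeq_eq_getD G γ v hv hconn hk hi, List.getD_eq_getElem _ _ (by omega)]
    exact List.getElem_mem _

lemma aSeq_injOn {i j : ℕ} (hi : i < γ.card) (hj : j < γ.card)
    (h : aSeq G γ v i = aSeq G γ v j) : i = j := by
  have h0 : 0 < γ.card := Finset.card_pos.2 ⟨v, hv⟩
  obtain ⟨hlen, hnd, hmem⟩ := bl_invariant G γ v hv hconn (γ.card - 1) (by omega)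
  unfold aSeq at h
  rw [List.getD_eq_getElem _ _ (by omega), List.getD_eq_getElem _ _ (by omega)] at h
  exact (List.Nodup.getElem_inj_iff hnd).1 h

lemma bl_toFinset : (bl G γ v (γ.card - 1)).toFinset = γ := by
  have h0 : 0 < γ.card := Finset.card_pos.2 ⟨v, hv⟩
  obtain ⟨hlen, hnd, hmem⟩ := bl_invariant G γ v hv hconn (γ.card - 1) (by omega)
  apply Finset.eq_of_subset_of_card_le
  · intro w hw; exact hmem w (List.mem_toFinset.1 hw)
  · rw [List.toFinset_card_of_nodup hnd, hlen]; omega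

lemma mem_γ_iff (w : V) : w ∈ γ ↔ ∃ i < γ.card, aSeq G γ v i = w := by
  have h0 : 0 < γ.card := Finset.card_pos.2 ⟨v, hv⟩
  have hbt := bl_toFinset G γ v hv hconn
  have hiff := mem_bl_iff G γ v hv hconn (show γ.card - 1 < γ.card by omega) w
  constructor
  · intro hw
    rw [← hbt, List.mem_toFinset, hiff] at hw
    obtain ⟨i, hi, h⟩ := hw
    exact ⟨i, by omega, h⟩
  · rintro ⟨i, hi, h⟩
    rw [← hbt, List.mem_toFinset, hiff]
    exact ⟨i, by omega, h⟩

/-- the step lemma -/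
lemma aSeq_step {k : ℕ} (hk : k + 1 < γ.card) :
    ∃ h : (nextS G γ v k).Nonempty, aSeq G γ v (k+1) = (nextS G γ v k).min' h := by
  obtain ⟨hlen, hnd, hmem⟩ := bl_invariant G γ v hv hconn (k+1) hk
  obtain ⟨hlen0, _, _⟩ := bl_invariant G γ v hv hconn k (by omega)
  have hSne : (nextS G γ v k).Nonempty := by
    by_contra h
    rw [bl_succ, dif_neg h] at hlen
    omega
  refine ⟨hSne, ?_⟩
  rw [aSeq_eq_getD G γ v hv hconn hk le_rfl, bl_succ, dif_pos hSne,
    List.getD_append_right _ _ _ _ (by omega)]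
  simp [hlen0]

/-- parent spec -/
lemma par_spec {j : ℕ} (hj1 : 1 ≤ j) (hjn : j < γ.card) :
    par G γ v j < j ∧ G.Adj (aSeq G γ v (par G γ v j)) (aSeq G γ v j) ∧
      ∀ i < j, G.Adj (aSeq G γ v i) (aSeq G γ v j) → par G γ v j ≤ i := by
  obtain ⟨k, rfl⟩ : ∃ k, j = k + 1 := ⟨j - 1, by omega⟩
  obtain ⟨hSne, hmin⟩ := aSeq_step G γ v hv hconn hjn
  have hmem := Finset.min'_mem _ hSne
  rw [← hmin] at hmem
  simp only [nextS, Finset.mem_filter] at hmem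
  obtain ⟨hγm, hnotbl, u, hu, hadj⟩ := hmem
  obtain ⟨i, hik, rfl⟩ := (mem_bl_iff G γ v hv hconn (by omega) u).1 hu
  have hne : ((Finset.range (k+1)).filter
      (fun i => G.Adj (aSeq G γ v i) (aSeq G γ v (k+1)))).Nonempty :=
    ⟨i, by simp only [Finset.mem_filter, Finset.mem_range]; exact ⟨by omega, hadj⟩⟩
  have hpar : par G γ v (k+1) = ((Finset.range (k+1)).filter
      (fun i => G.Adj (aSeq G γ v i) (aSeq G γ v (k+1)))).min' hne := by
    rw [par, dif_pos hne]
  have hmm := Finset.min'_mem _ hne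
  rw [← hpar] at hmm
  simp only [Finset.mem_filter, Finset.mem_range] at hmm
  refine ⟨hmm.1, hmm.2, ?_⟩
  intro i' hi' hadj'
  rw [hpar]
  exact Finset.min'_le _ _ (by simp only [Finset.mem_filter, Finset.mem_range]; exact ⟨hi', hadj'⟩)

lemma mem_nextS_char {k : ℕ} (hk : k + 1 < γ.card) (w : V) :
    w ∈ nextS G γ v k ↔
      ∃ j, k+1 ≤ j ∧ j < γ.card ∧ aSeq G γ v j = w ∧ par G γ v j ≤ k := by
  constructor
  · intro hw
    simp only [nextS, Finset.mem_filter] at hw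
    obtain ⟨hγm, hnb, u, hu, hadj⟩ := hw
    obtain ⟨j, hjn, rfl⟩ := (mem_γ_iff G γ v hv hconn w).1 hγm
    have hjk : k+1 ≤ j := by
      by_contra h
      exact hnb ((mem_bl_iff G γ v hv hconn (by omega) _).2 ⟨j, by omega, rfl⟩)
    obtain ⟨i, hik, rfl⟩ := (mem_bl_iff G γ v hv hconn (by omega) u).1 hu
    have hspec := par_spec G γ v hv hconn (show 1 ≤ j by omega) hjn
    exact ⟨j, hjk, hjn, rfl, le_trans (hspec.2.2 i (by omega) hadj) hik⟩
  · rintro ⟨j, hjk, hjn, rfl, hpar⟩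
    simp only [nextS, Finset.mem_filter]
    have hspec := par_spec G γ v hv hconn (show 1 ≤ j by omega) hjn
    refine ⟨(mem_γ_iff G γ v hv hconn _).2 ⟨j, hjn, rfl⟩, ?_, ?_⟩
    · intro hmem
      obtain ⟨i, hik, hieq⟩ := (mem_bl_iff G γ v hv hconn (by omega) _).1 hmem
      have := aSeq_injOn G γ v hv hconn (show i < γ.card by omega) hjn hieq
      omega
    · exact ⟨aSeq G γ v (par G γ v j),
        (mem_bl_iff G γ v hv hconn (by omega) _).2 ⟨par G γ v j, hpar, rfl⟩, hspec.2.1⟩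

omit hv hconn

lemma min'_congr' {α : Type*} [LinearOrder α] {s t : Finset α} (h : s = t) (hs : s.Nonempty) :
    s.min' hs = t.min' (h ▸ hs) := by subst h; rfl

end Enc

section Enc2
variable {V : Type*} [Fintype V] [DecidableEq V] [LinearOrder V]
variable (G : SimpleGraph V) [DecidableRel G.Adj]
variable (γ γ' : Finset V) (v : V)
variable (hv : v ∈ γ) (hconn : (G.induce (γ : Set V)).Connected)
variable (hv' : v ∈ γ') (hconn' : (G.induce (γ' : Set V)).Connected)
include hv hconn hv' hconn'

lemma nextS_dir (hcard : γ.card = γ'.card) (hcode : code G γ v = code G γ' v)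
    {k : ℕ} (hk : k + 1 < γ.card) (IH : ∀ i ≤ k, aSeq G γ v i = aSeq G γ' v i)
    (w : V) (hw : w ∈ nextS G γ v k) : w ∈ nextS G γ' v k := by
  obtain ⟨j, hjk, hjn, rfl, hpar⟩ := (mem_nextS_char G γ v hv hconn hk w).1 hw
  have hn1 : 1 ≤ γ.card := by omega
  have hpair : (par G γ v j, idxN G (aSeq G γ v (par G γ v j)) (aSeq G γ v j)) ∈ code G γ v := by
    apply Finset.mem_image_of_mem
    simp only [Finset.mem_Icc]
    omega
  rw [hcode] at hpair
  obtain ⟨j', hj'Icc, hpair'⟩ := Finset.mem_image.1 hpair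
  simp only [Finset.mem_Icc] at hj'Icc
  have hj'n : j' < γ'.card := by omega
  have hp1 : par G γ' v j' = par G γ v j := (Prod.mk.injEq _ _ _ _ ▸ hpair').1
  have hp2 : idxN G (aSeq G γ' v (par G γ' v j')) (aSeq G γ' v j')
      = idxN G (aSeq G γ v (par G γ v j)) (aSeq G γ v j) := (Prod.mk.injEq _ _ _ _ ▸ hpair').2
  have hspec := par_spec G γ v hv hconn (show 1 ≤ j by omega) hjn
  have hspec' := par_spec G γ' v hv' hconn' hj'Icc.1 hj'n
  have haeq : aSeq G γ' v (par G γ' v j') = aSeq G γ v (par G γ v j) := by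
    rw [hp1, ← IH (par G γ v j) hpar]
  rw [haeq] at hp2 hspec'
  have hww : aSeq G γ' v j' = aSeq G γ v j := idxN_inj G hspec'.2.1 hspec.2.1 hp2
  have hj'k : k + 1 ≤ j' := by
    by_contra h
    have h1 : aSeq G γ v j' = aSeq G γ v j := by rw [IH j' (by omega)]; exact hww
    have := aSeq_injOn G γ v hv hconn (show j' < γ.card by omega) hjn h1
    omega
  exact (mem_nextS_char G γ' v hv' hconn' (by omega) _).2
    ⟨j', hj'k, hj'n, hww, by rw [hp1]; exact hpar⟩

lemma aSeq_eq_of_code (hcard : γ.card = γ'.card) (hcode : code G γ v = code G γ' v) :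
    ∀ k, k < γ.card → aSeq G γ v k = aSeq G γ' v k := by
  intro k
  induction k using Nat.strong_induction_on with
  | _ k IH =>
    intro hk
    match k with
    | 0 => rw [aSeq_zero G γ v hv hconn, aSeq_zero G γ' v hv' hconn']
    | (k+1) =>
      have IH' : ∀ i ≤ k, aSeq G γ v i = aSeq G γ' v i := fun i hi => IH i (by omega) (by omega)
      have hSS : nextS G γ v k = nextS G γ' v k := by
        ext w
        constructor
        · exact nextS_dir G γ γ' v hv hconn hv' hconn' hcard hcode hk IH' w
        · exact nextS_dir G γ' γ v hv' hconn' hv hconn hcard.symm hcode.symm (k := k)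
            (by omega) (fun i hi => (IH' i hi).symm) w
      obtain ⟨hne, hmin⟩ := aSeq_step G γ v hv hconn hk
      obtain ⟨hne', hmin'⟩ := aSeq_step G γ' v hv' hconn' (k := k) (by omega)
      rw [hmin, hmin', min'_congr' hSS hne]

lemma code_injective (hcard : γ.card = γ'.card) (hcode : code G γ v = code G γ' v) :
    γ = γ' := by
  have key := aSeq_eq_of_code G γ γ' v hv hconn hv' hconn' hcard hcode
  ext w
  rw [mem_γ_iff G γ v hv hconn, mem_γ_iff G γ' v hv' hconn']
  constructor
  · rintro ⟨i, hi, rfl⟩; exact ⟨i, by omega, (key i hi).symm⟩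
  · rintro ⟨i, hi, rfl⟩; exact ⟨i, by omega, key i (by omega)⟩

end Enc2


section Enc3
variable {V : Type*} [Fintype V] [DecidableEq V] [LinearOrder V]
variable (G : SimpleGraph V) [DecidableRel G.Adj]
variable (γ : Finset V) (v : V)
variable (hv : v ∈ γ) (hconn : (G.induce (γ : Set V)).Connected)
include hv hconn

lemma code_card : (code G γ v).card = γ.card - 1 := by
  have h0 : 0 < γ.card := Finset.card_pos.2 ⟨v, hv⟩
  rw [code, Finset.card_image_of_injOn, Nat.card_Icc]
  · omega
  · intro j hj j' hj' hpair
    simp only [Finset.mem_coe, Finset.mem_Icc] at hj hj'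
    have hjn : j < γ.card := by omega
    have hj'n : j' < γ.card := by omega
    have hspec := par_spec G γ v hv hconn hj.1 hjn
    have hspec' := par_spec G γ v hv hconn hj'.1 hj'n
    have hp1 : par G γ v j = par G γ v j' := (Prod.mk.injEq _ _ _ _ ▸ hpair).1
    have hp2 := (Prod.mk.injEq _ _ _ _ ▸ hpair).2
    rw [hp1] at hp2 hspec
    exact aSeq_injOn G γ v hv hconn hjn hj'n (idxN_inj G hspec.2.1 hspec'.2.1 hp2)

lemma code_subset {Δ : ℕ} (hΔ : ∀ u, G.degree u ≤ Δ) :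
    code G γ v ⊆ Finset.range γ.card ×ˢ Finset.range Δ := by
  intro pair hmem
  obtain ⟨j, hj, rfl⟩ := Finset.mem_image.1 hmem
  simp only [Finset.mem_Icc] at hj
  have h0 : 0 < γ.card := Finset.card_pos.2 ⟨v, hv⟩
  have hjn : j < γ.card := by omega
  have hspec := par_spec G γ v hv hconn hj.1 hjn
  simp only [Finset.mem_product, Finset.mem_range]
  exact ⟨by omega, idxN_lt G hΔ hspec.2.1⟩

end Enc3

/-- In a graph of maximum degree `Δ`, the number of connected induced subgraphs
with `n` vertices containing a fixed vertex `v` is at most `(eΔ)^{n-1}`. -/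
theorem stmt_15 {V : Type*} [Fintype V] (G : SimpleGraph V) [DecidableRel G.Adj]
    (Δ : ℕ) (hΔ : ∀ u, G.degree u ≤ Δ) (v : V) (n : ℕ) (hn : 1 ≤ n) :
    ({γ : Finset V | γ.card = n ∧ v ∈ γ ∧ (G.induce (γ : Set V)).Connected}.ncard : ℝ)
      ≤ (Real.exp 1 * Δ) ^ (n - 1) := by
  letI : DecidableEq V := Classical.decEq V
  letI : LinearOrder V := LinearOrder.lift' (fun w => ((Fintype.equivFin V w : Fin _) : ℕ))
    (fun a b h => (Fintype.equivFin V).injective (Fin.val_injective h))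
  set A : Set (Finset V) :=
    {γ : Finset V | γ.card = n ∧ v ∈ γ ∧ (G.induce (γ : Set V)).Connected} with hA
  have hstep : A.ncard ≤ ((Finset.range n ×ˢ Finset.range Δ).powersetCard (n-1)).card := by
    rw [← Set.ncard_coe_finset]
    apply Set.ncard_le_ncard_of_injOn (fun γ => code G γ v)
    · rintro γ ⟨hcard, hv, hconn⟩
      simp only [Finset.mem_coe, Finset.mem_powersetCard]
      constructor
      · rw [← hcard]; exact code_subset G γ v hv hconn hΔ
      · rw [code_card G γ v hv hconn, hcard]
    · rintro γ ⟨hcard, hv1, hconn1⟩ γ' ⟨hcard', hv1', hconn1'⟩ hcode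
      exact code_injective G γ γ' v hv1 hconn1 hv1' hconn1' (by rw [hcard, hcard']) hcode
  have hcount : ((Finset.range n ×ˢ Finset.range Δ).powersetCard (n-1)).card
      = (n * Δ).choose (n-1) := by
    rw [Finset.card_powersetCard, Finset.card_product, Finset.card_range, Finset.card_range]
  calc (A.ncard : ℝ) ≤ ((n * Δ).choose (n-1) : ℕ) := by
        exact_mod_cast hstep.trans_eq hcount
    _ ≤ (Real.exp 1 * Δ) ^ (n-1) := aux_choose_le n Δ hn
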